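/- For every integer k ≥ 2 there exists a connected finite simple identifiable graph G of order n = 5k + 1, with girth at least 5, minimum degree at least 2, and identifying code number γID(G) = 3k = (3/5)·(n − 1). (In particular, there are infinitely many connected graphs of girth at least 5 and minimum degree at least 2 attaining γID(G) = (3/5)·(n − 1).) -/

import Mathlib

/-- A graph is *identifiable* if no two distinct vertices have the same closed
neighbourhood. -/
def SimpleGraph.Identifiable {V : Type*} (G : SimpleGraph V) : Prop :=
  ∀ u v : V, insert u (G.neighborSet u) = insert v (G.neighborSet v) → u = v

/-- A set of vertices is *dominating* if every vertex is equal or adjacent to a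
member of the set. -/
def SimpleGraph.DominatingSet {V : Type*} (G : SimpleGraph V) (D : Set V) : Prop :=
  ∀ v : V, ∃ d ∈ D, d = v ∨ G.Adj d v

/-- A set `C` is an *identifying code* if it is dominating and every two distinct
vertices have different closed neighbourhoods within `C`. -/
def SimpleGraph.IdentifyingCode {V : Type*} (G : SimpleGraph V) (C : Set V) : Prop :=
  G.DominatingSet C ∧
    ∀ u v : V, u ≠ v →
      insert u (G.neighborSet u) ∩ C ≠ insert v (G.neighborSet v) ∩ C

/-- The identifying code number: the minimum size of an identifying code. -/
noncomputable def SimpleGraph.gammaID {V : Type*} (G : SimpleGraph V) : ℕ :=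
  sInf {k : ℕ | ∃ C : Set V, G.IdentifyingCode C ∧ C.ncard = k}


open SimpleGraph

abbrev Vtx (k : ℕ) := Option (Fin k × Fin 5)

def gAdj (k : ℕ) : Vtx k → Vtx k → Prop
  | none, none => False
  | none, some p => p.2 = 0
  | some p, none => p.2 = 0
  | some p, some q => p.1 = q.1 ∧ (q.2 = p.2 + 1 ∨ p.2 = q.2 + 1)

def myG (k : ℕ) : SimpleGraph (Vtx k) where
  Adj := gAdj k
  symm := ⟨by rintro (_|⟨i,j⟩) (_|⟨i',j'⟩) h <;> simp [gAdj] at * <;> tauto⟩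
  loopless := ⟨by rintro (_|⟨i,j⟩) h <;> simp [gAdj] at h <;> fin_omega⟩

lemma adj_ss {k i i' j j'} : (myG k).Adj (some (i,j)) (some (i',j')) ↔ i = i' ∧ (j' = j + 1 ∨ j = j' + 1) := Iff.rfl
lemma adj_ns {k} {p : Fin k × Fin 5} : (myG k).Adj none (some p) ↔ p.2 = 0 := Iff.rfl
lemma adj_sn {k} {p : Fin k × Fin 5} : (myG k).Adj (some p) none ↔ p.2 = 0 := Iff.rfl
lemma adj_nn {k} : ¬ (myG k).Adj none none := id

-- triangle-free
lemma tri_free {k} (a b c : Vtx k) : (myG k).Adj a b → (myG k).Adj b c → (myG k).Adj a c → False := by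
  intro h1 h2 h3
  rcases a with _|⟨i,j⟩ <;> rcases b with _|⟨i2,j2⟩ <;> rcases c with _|⟨i3,j3⟩ <;>
    first
      | exact adj_nn h1 | exact adj_nn h2 | exact adj_nn h3
      | (simp only [adj_ss, adj_ns, adj_sn] at h1 h2 h3;
         first
          | (obtain ⟨e1, d1⟩ := h1; obtain ⟨e2, d2⟩ := h2;
             (try obtain ⟨e3, d3⟩ := h3); subst e1; (try subst e2); fin_omega)
          | fin_omega)

-- square-free
lemma sq_free {k} (a b c d : Vtx k) (hac : a ≠ c) (hbd : b ≠ d) :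
    (myG k).Adj a b → (myG k).Adj b c → (myG k).Adj c d → (myG k).Adj d a → False := by
  intro h1 h2 h3 h4
  rcases a with _|⟨i1,j1⟩ <;> rcases b with _|⟨i2,j2⟩ <;> rcases c with _|⟨i3,j3⟩ <;>
    rcases d with _|⟨i4,j4⟩ <;>
    first
      | exact adj_nn h1 | exact adj_nn h2 | exact adj_nn h3 | exact adj_nn h4
      | exact hac rfl | exact hbd rfl
      | (simp only [adj_ss, adj_ns, adj_sn, ne_eq, Option.some.injEq, Prod.mk.injEq,
          not_and] at h1 h2 h3 h4 hac hbd;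
         (try obtain ⟨e1, d1⟩ := h1); (try obtain ⟨e2, d2⟩ := h2);
         (try obtain ⟨e3, d3⟩ := h3); (try obtain ⟨e4, d4⟩ := h4);
         (try subst e1); (try subst e2); (try subst e3); (try subst e4);
         first
          | fin_omega
          | (simp only [forall_const, true_implies] at hac hbd; fin_omega)
          | exact hac rfl rfl
          | exact hbd rfl rfl)

lemma len_ne3 {k} {a : Vtx k} (w : (myG k).Walk a a) (h : w.length = 3) : False := by
  cases w with
  | nil => simp at h
  | cons h1 p =>
    cases p with
    | nil => simp at h
    | cons h2 q =>
      cases q with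
      | nil => simp at h
      | cons h3 r =>
        cases r with
        | nil => exact tri_free _ _ _ h1 h2 (h3.symm)
        | cons h4 s => simp [SimpleGraph.Walk.length_cons] at h; try omega

lemma len_ne4 {k} {a : Vtx k} (w : (myG k).Walk a a) (hw : w.IsCycle) (h : w.length = 4) :
    False := by
  cases w with
  | nil => simp at h
  | cons h1 p =>
    cases p with
    | nil => simp at h
    | cons h2 q =>
      cases q with
      | nil => simp at h
      | cons h3 r =>
        cases r with
        | nil => simp at h
        | cons h4 s =>
          cases s with
          | nil =>
            have hnd := hw.support_nodup
            simp [SimpleGraph.Walk.support_cons, List.nodup_cons] at hnd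
            exact sq_free _ _ _ _ (fun e => hnd.2.1.2 e.symm) hnd.1.2.1 h1 h2 h3 h4
          | cons h5 t => simp [SimpleGraph.Walk.length_cons] at h; try omega

lemma girth5 {k} : 5 ≤ (myG k).egirth := by
  rw [SimpleGraph.le_egirth]
  intro a w hw
  have h3 := hw.three_le_length
  have : 5 ≤ w.length := by
    by_contra h5
    push_neg at h5
    interval_cases h : w.length
    · exact len_ne3 w h
    · exact len_ne4 w hw h
  exact_mod_cast this

lemma reach_none {k} (v : Vtx k) : (myG k).Reachable none v := by
  rcases v with _ | ⟨i, j⟩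
  · rfl
  · have r0 : (myG k).Reachable none (some (i, 0)) := SimpleGraph.Adj.reachable (show (myG k).Adj none (some (i,0)) by exact rfl)
    have step : ∀ j : Fin 5, (myG k).Reachable (some (i, j)) (some (i, j + 1)) :=
      fun j => SimpleGraph.Adj.reachable (by exact ⟨rfl, Or.inl rfl⟩)
    fin_cases j
    · exact r0
    · exact r0.trans (step 0)
    · exact (r0.trans (step 0)).trans (step 1)
    · exact ((r0.trans (step 0)).trans (step 1)).trans (step 2)
    · exact (((r0.trans (step 0)).trans (step 1)).trans (step 2)).trans (step 3)

lemma conn {k} : (myG k).Connected := by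
  rw [SimpleGraph.connected_iff]
  exact ⟨fun u v => (reach_none u).symm.trans (reach_none v), ⟨none⟩⟩

lemma mem_nbr {k} {v w : Vtx k} : w ∈ (myG k).neighborSet v ↔ (myG k).Adj v w := Iff.rfl

lemma deg2 {k} (hk : 2 ≤ k) (v : Vtx k) : 2 ≤ ((myG k).neighborSet v).ncard := by
  have h1 : 1 < ((myG k).neighborSet v).ncard := by
    rw [Set.one_lt_ncard_iff (Set.toFinite _)]
    rcases v with _ | ⟨i, j⟩
    · refine ⟨some (⟨0, by omega⟩, 0), some (⟨1, by omega⟩, 0), rfl, rfl, ?_⟩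
      simp [Fin.ext_iff]
    · refine ⟨some (i, j + 1), some (i, j + 4), ⟨rfl, Or.inl rfl⟩, ⟨rfl, Or.inr (by fin_omega)⟩, ?_⟩
      simp only [ne_eq, Option.some.injEq, Prod.mk.injEq, true_and]
      fin_omega
  omega

lemma identifiable {k} (hk : 2 ≤ k) : (myG k).Identifiable := by
  intro u v h
  by_contra hne
  have hu : u ∈ insert v ((myG k).neighborSet v) := h ▸ Set.mem_insert u _
  have hadj : (myG k).Adj v u := by
    rcases hu with h' | h'
    · exact absurd h' hne
    · exact h'
  have h2 := deg2 hk u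
  obtain ⟨w, hw, hwv⟩ : ∃ w ∈ (myG k).neighborSet u, w ≠ v := by
    by_contra hc
    push_neg at hc
    have : (myG k).neighborSet u ⊆ {v} := fun x hx => hc x hx
    have := Set.ncard_le_ncard this (Set.finite_singleton v)
    rw [Set.ncard_singleton] at this
    omega
  have hw' : w ∈ insert v ((myG k).neighborSet v) := h ▸ Set.mem_insert_of_mem u hw
  rcases hw' with h' | h'
  · exact hwv h'
  · exact tri_free v u w hadj hw h'

def Cfin (k : ℕ) : Finset (Vtx k) :=
  ((Finset.univ : Finset (Fin k)) ×ˢ ({0, 1, 2} : Finset (Fin 5))).image some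

def Cset (k : ℕ) : Set (Vtx k) := ↑(Cfin k)

lemma mem_Cset {k} {i : Fin k} {j : Fin 5} :
    some (i, j) ∈ Cset k ↔ j = 0 ∨ j = 1 ∨ j = 2 := by
  simp [Cset, Cfin, Finset.mem_image, Prod.ext_iff]
  aesop

lemma none_not_mem_Cset {k} : none ∉ Cset k := by
  simp [Cset, Cfin, Finset.mem_image]

lemma Cset_ncard {k} : (Cset k).ncard = 3 * k := by
  rw [Cset, Set.ncard_coe_finset, Cfin,
    Finset.card_image_of_injective _ (Option.some_injective _), Finset.card_product]
  simp [mul_comm]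

lemma mem_closed {k} {v w : Vtx k} :
    w ∈ insert v ((myG k).neighborSet v) ↔ w = v ∨ (myG k).Adj v w := by
  simp [SimpleGraph.mem_neighborSet]

-- the dominating code vertex for position j
def dj : Fin 5 → Fin 5 := fun j => if j.val ≤ 2 then j else if j = 3 then 2 else 0

lemma dj_spec {k} (i : Fin k) (j : Fin 5) :
    some (i, dj j) ∈ Cset k ∧ (some (i, dj j) = some (i, j) ∨ (myG k).Adj (some (i, dj j)) (some (i, j))) := by
  fin_cases j <;>
    simp [dj, mem_Cset, adj_ss] <;> decide

lemma dominating {k} (hk : 2 ≤ k) : (myG k).DominatingSet (Cset k) := by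
  intro v
  rcases v with _ | ⟨i, j⟩
  · refine ⟨some (⟨0, by omega⟩, 0), ?_, Or.inr rfl⟩
    rw [mem_Cset]; exact Or.inl rfl
  · obtain ⟨h1, h2⟩ := dj_spec i j
    exact ⟨some (i, dj j), h1, h2⟩

lemma aux1 {k} (hk : 2 ≤ k) (i : Fin k) (j : Fin 5)
    (heq : insert (none : Vtx k) ((myG k).neighborSet none) ∩ Cset k
         = insert (some (i, j)) ((myG k).neighborSet (some (i, j))) ∩ Cset k) : False := by
  set i' : Fin k := if i.val = 0 then ⟨1, by omega⟩ else ⟨0, by omega⟩ with hi'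
  have hii : i' ≠ i := by
    rcases eq_or_ne i.val 0 with h | h <;> simp [hi', h, Fin.ext_iff] <;> omega
  have hw : some (i', 0) ∈ insert (none : Vtx k) ((myG k).neighborSet none) ∩ Cset k := by
    refine ⟨mem_closed.mpr (Or.inr rfl), mem_Cset.mpr (Or.inl rfl)⟩
  rw [heq] at hw
  rcases mem_closed.mp hw.1 with h | h
  · exact hii (congrArg (fun o => o.elim i Prod.fst) h)
  · exact hii h.1.symm

lemma aux2 {k} {i i' : Fin k} (j j' : Fin 5) (hii : i ≠ i')
    (heq : insert (some (i, j) : Vtx k) ((myG k).neighborSet (some (i, j))) ∩ Cset k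
         = insert (some (i', j')) ((myG k).neighborSet (some (i', j'))) ∩ Cset k) : False := by
  obtain ⟨h1, h2⟩ := dj_spec i j
  have hw : some (i, dj j) ∈ insert (some (i, j) : Vtx k) ((myG k).neighborSet (some (i, j))) ∩ Cset k := by
    refine ⟨mem_closed.mpr ?_, h1⟩
    rcases h2 with h | h
    · exact Or.inl h
    · exact Or.inr (h.symm)
  rw [heq] at hw
  rcases mem_closed.mp hw.1 with h | h
  · exact hii (congrArg (fun o => o.elim i Prod.fst) h)
  · exact hii h.1.symm

lemma aux3 {k} {i : Fin k} {j j' : Fin 5} (hne : j ≠ j')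
    (heq : insert (some (i, j) : Vtx k) ((myG k).neighborSet (some (i, j))) ∩ Cset k
         = insert (some (i, j')) ((myG k).neighborSet (some (i, j'))) ∩ Cset k) : False := by
  fin_cases j <;> fin_cases j' <;> (try exact hne rfl) <;>
    first
    | (have h := Set.ext_iff.mp heq (some (i, 0));
       simp [mem_closed, mem_Cset, adj_ss, Set.mem_inter_iff, Prod.ext_iff,
         SimpleGraph.mem_neighborSet] at h; done)
    | (have h := Set.ext_iff.mp heq (some (i, 1));
       simp [mem_closed, mem_Cset, adj_ss, Set.mem_inter_iff, Prod.ext_iff,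
         SimpleGraph.mem_neighborSet] at h; done)
    | (have h := Set.ext_iff.mp heq (some (i, 2));
       simp [mem_closed, mem_Cset, adj_ss, Set.mem_inter_iff, Prod.ext_iff,
         SimpleGraph.mem_neighborSet] at h; done)

lemma code_id {k} (hk : 2 ≤ k) : (myG k).IdentifyingCode (Cset k) := by
  refine ⟨dominating hk, ?_⟩
  intro u v hne heq
  rcases u with _ | ⟨i, j⟩ <;> rcases v with _ | ⟨i', j'⟩
  · exact hne rfl
  · exact aux1 hk i' j' heq
  · exact aux1 hk i j heq.symm
  · by_cases hii : i = i'
    · subst hii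
      exact aux3 (fun e => hne (by rw [e])) heq
    · exact aux2 j j' hii heq

lemma copy_three {k} (C : Set (Vtx k)) (hC : (myG k).IdentifyingCode C)
    (F : Finset (Vtx k)) (hF : ∀ w, w ∈ F ↔ w ∈ C) (i : Fin k) :
    3 ≤ (F.filter (fun v => ∃ j, v = some (i, j))).card := by
  classical
  set Fi := F.filter (fun v => ∃ j, v = some (i, j)) with hFi
  by_contra hlt
  push_neg at hlt
  set K : Fin 5 → Finset (Vtx k) :=
    fun j => Fi.filter (fun w => w = some (i, j) ∨ (myG k).Adj (some (i, j)) w) with hK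
  -- nonempty for j ≠ 0
  have hne : ∀ j : Fin 5, j ≠ 0 → (K j).Nonempty := by
    intro j hj
    obtain ⟨d, hdC, hd⟩ := hC.1 (some (i, j))
    refine ⟨d, ?_⟩
    have hdF : d ∈ F := (hF d).mpr hdC
    have hdi : ∃ j2, d = some (i, j2) := by
      rcases hd with h | h
      · exact ⟨j, h⟩
      · rcases d with _ | ⟨i2, j2⟩
        · exact absurd h hj
        · exact ⟨j2, by rw [(adj_ss.mp h).1]⟩
    rw [hK]
    simp only [Finset.mem_filter, hFi]
    refine ⟨⟨hdF, hdi⟩, ?_⟩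
    rcases hd with h | h
    · exact Or.inl h
    · exact Or.inr (h.symm)
  -- K j as set is the identifying trace, for j ≠ 0
  have hKset : ∀ j : Fin 5, j ≠ 0 →
      (↑(K j) : Set (Vtx k)) = insert (some (i, j)) ((myG k).neighborSet (some (i, j))) ∩ C := by
    intro j hj
    ext w
    simp only [Finset.coe_filter, Set.mem_setOf_eq, hK, hFi, Finset.mem_filter,
      Set.mem_inter_iff, mem_closed, SimpleGraph.mem_neighborSet]
    constructor
    · rintro ⟨⟨hwF, -⟩, h⟩
      exact ⟨h.imp id id, (hF w).mp hwF⟩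
    · rintro ⟨h, hwC⟩
      refine ⟨⟨(hF w).mpr hwC, ?_⟩, h⟩
      rcases h with h | h
      · exact ⟨j, h⟩
      · rcases w with _ | ⟨i2, j2⟩
        · exact absurd h hj
        · exact ⟨j2, by rw [(adj_ss.mp h).1]⟩
  -- injectivity on {1,2,3,4}
  have hinj : ∀ j ∈ ({1, 2, 3, 4} : Finset (Fin 5)), ∀ j' ∈ ({1, 2, 3, 4} : Finset (Fin 5)),
      K j = K j' → j = j' := by
    intro j hj j' hj' hKK
    by_contra hjj
    have hj0 : j ≠ 0 := by fin_cases hj <;> simp_all <;> decide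
    have hj'0 : j' ≠ 0 := by fin_cases hj' <;> simp_all <;> decide
    have : insert (some (i, j) : Vtx k) ((myG k).neighborSet (some (i, j))) ∩ C
         = insert (some (i, j')) ((myG k).neighborSet (some (i, j'))) ∩ C := by
      rw [← hKset j hj0, ← hKset j' hj'0, hKK]
    exact hC.2 (some (i, j)) (some (i, j'))
      (fun e => hjj (by simpa using e)) this
  -- pigeonhole
  have hmapsto : ∀ j ∈ ({1, 2, 3, 4} : Finset (Fin 5)),
      K j ∈ Fi.powerset.erase ∅ := by
    intro j hj
    have hj0 : j ≠ 0 := by fin_cases hj <;> decide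
    rw [Finset.mem_erase, Finset.mem_powerset]
    exact ⟨Finset.nonempty_iff_ne_empty.mp (hne j hj0), Finset.filter_subset _ _⟩
  have hcard := Finset.card_le_card_of_injOn K hmapsto
    (fun a ha b hb hab => hinj a ha b hb hab)
  have hP : (Fi.powerset.erase ∅).card = 2 ^ Fi.card - 1 := by
    rw [Finset.card_erase_of_mem (Finset.empty_mem_powerset _), Finset.card_powerset]
  have h4 : ({1, 2, 3, 4} : Finset (Fin 5)).card = 4 := by decide
  rw [h4, hP] at hcard
  have : 2 ^ Fi.card ≤ 2 ^ 2 := Nat.pow_le_pow_right (by omega) (by omega)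
  omega

lemma lower_bound {k} (C : Set (Vtx k)) (hC : (myG k).IdentifyingCode C) :
    3 * k ≤ C.ncard := by
  classical
  have hfin : C.Finite := Set.toFinite C
  set F := hfin.toFinset with hFdef
  have hF : ∀ w, w ∈ F ↔ w ∈ C := fun w => Set.Finite.mem_toFinset hfin
  have hncard : C.ncard = F.card := by
    rw [hFdef, Set.ncard_eq_toFinset_card _ hfin]
  set Fi : Fin k → Finset (Vtx k) :=
    fun i => F.filter (fun v => ∃ j, v = some (i, j)) with hFi
  have hdisj : ∀ x ∈ (Finset.univ : Finset (Fin k)), ∀ y ∈ Finset.univ, x ≠ y →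
      Disjoint (Fi x) (Fi y) := by
    intro x _ y _ hxy
    rw [Finset.disjoint_left]
    intro a hax hay
    simp only [hFi, Finset.mem_filter] at hax hay
    obtain ⟨j1, rfl⟩ := hax.2
    obtain ⟨j2, he⟩ := hay.2
    exact hxy (by simpa using congrArg (fun o => o.elim x Prod.fst) he)
  have hsum : ∑ i : Fin k, (Fi i).card = (Finset.univ.biUnion Fi).card :=
    (Finset.card_biUnion hdisj).symm
  have hsub : Finset.univ.biUnion Fi ⊆ F := by
    intro a ha
    rw [Finset.mem_biUnion] at ha
    obtain ⟨i, -, hai⟩ := ha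
    exact (Finset.mem_filter.mp hai).1
  calc 3 * k = ∑ _i : Fin k, 3 := by simp [mul_comm]
    _ ≤ ∑ i : Fin k, (Fi i).card :=
        Finset.sum_le_sum (fun i _ => copy_three C hC F hF i)
    _ = (Finset.univ.biUnion Fi).card := hsum
    _ ≤ F.card := Finset.card_le_card hsub
    _ = C.ncard := hncard.symm

/-- Proposition: for every `k ≥ 2` there is a connected identifiable graph of order
`n = 5k+1`, girth at least 5, minimum degree at least 2, and identifying code
number `3k = (3/5)·(n-1)`. -/
theorem exists_connected_graph_gammaID_eq_three_fifths
    (k : ℕ) (hk : 2 ≤ k) :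
    ∃ (V : Type) (inst : Fintype V) (G : SimpleGraph V),
      G.Connected ∧
      G.Identifiable ∧
      @Fintype.card V inst = 5 * k + 1 ∧
      5 ≤ G.egirth ∧
      (∀ v : V, 2 ≤ (G.neighborSet v).ncard) ∧
      G.gammaID = 3 * k := by
  refine ⟨Vtx k, inferInstance, myG k, conn, identifiable hk, ?_, girth5, deg2 hk, ?_⟩
  · simp [mul_comm]
  · have hmem : 3 * k ∈ {m : ℕ | ∃ C : Set (Vtx k), (myG k).IdentifyingCode C ∧ C.ncard = m} :=
      ⟨Cset k, code_id hk, Cset_ncard⟩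
    refine le_antisymm (Nat.sInf_le hmem) ?_
    have hsm := Nat.sInf_mem (⟨3 * k, hmem⟩ :
      {m : ℕ | ∃ C : Set (Vtx k), (myG k).IdentifyingCode C ∧ C.ncard = m}.Nonempty)
    obtain ⟨C, hC, hcard⟩ := hsm
    rw [SimpleGraph.gammaID, ← hcard]
    exact lower_bound C hC
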